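/- The density property is expressible in the One-Step Graded μ-Calculus: a Kripke tree (T, Lab) satisfies the OSGμC sentence νX. μY. (◇_{≥2} X) ∨ (◇_{≥1} Y) if and only if T is dense. -/
import Mathlib


/-! ## Trees over ℕ* -/

abbrev Node : Type := List ℕ

/-- `T` is a tree with root `r`: `r ∈ T`, every node extends `r`, and `T` is
prefix-closed above `r`. -/
def IsTreeRooted (T : Set Node) (r : Node) : Prop :=
  r ∈ T ∧ (∀ τ ∈ T, r <+: τ) ∧
    ∀ σ σ' : List ℕ, r ++ σ ∈ T → σ' <+: σ → r ++ σ' ∈ T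

/-- `T ⊆ ℕ*` is a tree. -/
def IsTree (T : Set Node) : Prop := ∃ r : Node, IsTreeRooted T r

/-- `τ'` is a child of `τ` in `T`. -/
def childIn (T : Set Node) (τ τ' : Node) : Prop := τ' ∈ T ∧ ∃ n : ℕ, τ' = τ ++ [n]

/-- every node of `T` has a child in `T`. -/
def NonBlocking (T : Set Node) : Prop := ∀ τ ∈ T, ∃ n : ℕ, τ ++ [n] ∈ T

/-- every node of `T` has finitely many children in `T`. -/
def FinBranching (T : Set Node) : Prop := ∀ τ ∈ T, {τ' : Node | childIn T τ τ'}.Finite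

/-- `S` is a subtree of `T`. -/
def IsSubtree (T S : Set Node) : Prop := S ⊆ T ∧ IsTree S

/-- `P` is a path of `T`: a subtree totally ordered by the child relation
(each node has at most one child in `P`). -/
def IsPathOf (T P : Set Node) : Prop :=
  IsSubtree T P ∧ ∀ τ ∈ P, ∀ n m : ℕ, τ ++ [n] ∈ P → τ ++ [m] ∈ P → n = m

/-- `T` is a chain: a tree in which each node has at most one child. -/
def IsChainTree (T : Set Node) : Prop :=
  IsTree T ∧ ∀ τ ∈ T, ∀ n m : ℕ, τ ++ [n] ∈ T → τ ++ [m] ∈ T → n = m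

/-- `T` is dense: it contains a subtree every node of which has a descendant
in the subtree with at least two distinct children in the subtree. -/
def DenseTree (T : Set Node) : Prop :=
  ∃ S : Set Node, IsSubtree T S ∧ ∀ τ ∈ S, ∃ τ' ∈ S, τ <+: τ' ∧
    ∃ n m : ℕ, n ≠ m ∧ τ' ++ [n] ∈ S ∧ τ' ++ [m] ∈ S

/-- A Kripke tree over `AP`: a non-blocking tree together with a labelling. -/
structure KripkeTree (AP : Type) where
  T : Set Node
  root : Node
  rooted : IsTreeRooted T root
  nonblocking : NonBlocking T
  Lab : Node → Set AP

/-! ## MSOL syntax -/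

inductive MSOL (AP : Type) : Type
  | atom : AP → ℕ → MSOL AP          -- P_a(x)
  | le   : ℕ → ℕ → MSOL AP           -- x ≤ y
  | mem  : ℕ → ℕ → MSOL AP           -- x ∈ X
  | not  : MSOL AP → MSOL AP
  | and  : MSOL AP → MSOL AP → MSOL AP
  | exFO : ℕ → MSOL AP → MSOL AP     -- ∃x. φ
  | exSO : ℕ → MSOL AP → MSOL AP     -- ∃X. φ

namespace MSOL

def freeFO {AP : Type} : MSOL AP → Set ℕ
  | atom _ x => {x}
  | le x y => {x, y}
  | mem x _ => {x}
  | not φ => φ.freeFO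
  | and φ ψ => φ.freeFO ∪ ψ.freeFO
  | exFO x φ => φ.freeFO \ {x}
  | exSO _ φ => φ.freeFO

def freeSO {AP : Type} : MSOL AP → Set ℕ
  | atom _ _ => ∅
  | le _ _ => ∅
  | mem _ X => {X}
  | not φ => φ.freeSO
  | and φ ψ => φ.freeSO ∪ ψ.freeSO
  | exFO _ φ => φ.freeSO
  | exSO X φ => φ.freeSO \ {X}

/-- A sentence is a formula with no free variables. -/
def IsSentence {AP : Type} (φ : MSOL AP) : Prop := φ.freeFO = ∅ ∧ φ.freeSO = ∅

/-- The first-order fragment: no second-order variables. -/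
def IsFO {AP : Type} : MSOL AP → Prop
  | atom _ _ => True
  | le _ _ => True
  | mem _ _ => False
  | not φ => φ.IsFO
  | and φ ψ => φ.IsFO ∧ ψ.IsFO
  | exFO _ φ => φ.IsFO
  | exSO _ _ => False

end MSOL

/-! ## MSOL semantics, parametrized by the range of second-order quantifiers -/

/-- A second-order domain: for each tree, the collection of sets that
second-order quantifiers range over. -/
abbrev SODom : Type := Set Node → Set (Set Node)

def Sat {AP : Type} (D : SODom) (K : KripkeTree AP) :
    (ℕ → Node) → (ℕ → Set Node) → MSOL AP → Prop
  | V1, _,  .atom a x => V1 x ∈ K.T ∧ a ∈ K.Lab (V1 x)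
  | V1, _,  .le x y => V1 x ∈ K.T ∧ V1 y ∈ K.T ∧ V1 x <+: V1 y
  | V1, V2, .mem x X => V1 x ∈ V2 X
  | V1, V2, .not φ => ¬ Sat D K V1 V2 φ
  | V1, V2, .and φ ψ => Sat D K V1 V2 φ ∧ Sat D K V1 V2 ψ
  | V1, V2, .exFO x φ => ∃ τ ∈ K.T, Sat D K (Function.update V1 x τ) V2 φ
  | V1, V2, .exSO X φ => ∃ S ∈ D K.T, Sat D K V1 (Function.update V2 X S) φ

/-- A logic: a syntactic fragment of MSOL together with a second-order domain. -/
structure MLogic (AP : Type) where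
  syn : MSOL AP → Prop
  dom : SODom

namespace MLogic

/-- A Kripke tree satisfies a sentence. -/
def KSat {AP : Type} (L : MLogic AP) (K : KripkeTree AP) (φ : MSOL AP) : Prop :=
  ∃ V1 V2, Sat L.dom K V1 V2 φ

/-- `L ≤ L'` over the class `M`. -/
def Leq {AP : Type} (M : Set (KripkeTree AP)) (L L' : MLogic AP) : Prop :=
  ∀ φ : MSOL AP, φ.IsSentence → L.syn φ →
    ∃ φ' : MSOL AP, φ'.IsSentence ∧ L'.syn φ' ∧
      ∀ K ∈ M, (L.KSat K φ ↔ L'.KSat K φ')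

/-- `L < L'` over the class `M`. -/
def Lt {AP : Type} (M : Set (KripkeTree AP)) (L L' : MLogic AP) : Prop :=
  Leq M L L' ∧ ¬ Leq M L' L

/-- `L ≡ L'` over the class `M`. -/
def EquivExp {AP : Type} (M : Set (KripkeTree AP)) (L L' : MLogic AP) : Prop :=
  Leq M L L' ∧ Leq M L' L

/-- `L` and `L'` are expressively incomparable over the class `M`. -/
def Incomp {AP : Type} (M : Set (KripkeTree AP)) (L L' : MLogic AP) : Prop :=
  ¬ Leq M L L' ∧ ¬ Leq M L' L

end MLogic

/-! ## The concrete logics -/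

def MSOdom : SODom := fun T => {S | S ⊆ T}
def MTLdom : SODom := fun T => {S | S ⊆ T ∧ IsTree S}
def MPLdom : SODom := fun T => {S | IsPathOf T S}
def weakDom (D : SODom) : SODom := fun T => {S | S ∈ D T ∧ S.Finite}
def coweakDom (D : SODom) : SODom := fun T => {S | S ∈ D T ∧ S.Infinite}

def MSO (AP : Type) : MLogic AP := ⟨fun _ => True, MSOdom⟩
def MTL (AP : Type) : MLogic AP := ⟨fun _ => True, MTLdom⟩
def MPL (AP : Type) : MLogic AP := ⟨fun _ => True, MPLdom⟩
def WMSO (AP : Type) : MLogic AP := ⟨fun _ => True, weakDom MSOdom⟩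
def WMTL (AP : Type) : MLogic AP := ⟨fun _ => True, weakDom MTLdom⟩
def WMPL (AP : Type) : MLogic AP := ⟨fun _ => True, weakDom MPLdom⟩
def CoWMSO (AP : Type) : MLogic AP := ⟨fun _ => True, coweakDom MSOdom⟩
def CoWMTL (AP : Type) : MLogic AP := ⟨fun _ => True, coweakDom MTLdom⟩
def CoWMPL (AP : Type) : MLogic AP := ⟨fun _ => True, coweakDom MPLdom⟩
def FOL (AP : Type) : MLogic AP := ⟨MSOL.IsFO, MSOdom⟩

/-! ## Classes of Kripke trees -/

def allKT (AP : Type) : Set (KripkeTree AP) := Set.univ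
def finBrKT (AP : Type) : Set (KripkeTree AP) := {K | FinBranching K.T}
/-- Kripke trees whose underlying tree is an infinite chain
(every node has exactly one child). -/
def chainKT (AP : Type) : Set (KripkeTree AP) :=
  {K | ∀ τ ∈ K.T, ∃! τ' : Node, childIn K.T τ τ'}

/-! ## Graded μ-calculus -/

inductive GMC (AP : Type) : Type
  | ff  : GMC AP
  | tt  : GMC AP
  | atom : AP → GMC AP
  | not : GMC AP → GMC AP
  | and : GMC AP → GMC AP → GMC AP
  | or  : GMC AP → GMC AP → GMC AP
  | var : ℕ → GMC AP
  | dia : ℕ → GMC AP → GMC AP     -- ◇_{≥k} φ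
  | box : ℕ → GMC AP → GMC AP     -- □_{<k} φ
  | mu  : ℕ → GMC AP → GMC AP
  | nu  : ℕ → GMC AP → GMC AP

namespace GMC

/-- The set of children of `τ` in `T`. -/
def childrenIn (T : Set Node) (τ : Node) : Set Node := {τ' : Node | childIn T τ τ'}

/-- `S` contains at least `k` elements. -/
def atLeast (k : ℕ) (S : Set Node) : Prop :=
  ∃ F : Finset Node, F.card = k ∧ ↑F ⊆ S

/-- Denotation of a graded μ-calculus formula in a Kripke tree, under an
assignment of the fixpoint variables to sets of nodes. -/
def denot {AP : Type} (K : KripkeTree AP) : GMC AP → (ℕ → Set Node) → Set Node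
  | .ff, _ => ∅
  | .tt, _ => K.T
  | .atom a, _ => {τ ∈ K.T | a ∈ K.Lab τ}
  | .not φ, V => K.T \ denot K φ V
  | .and φ ψ, V => denot K φ V ∩ denot K ψ V
  | .or φ ψ, V => denot K φ V ∪ denot K ψ V
  | .var X, V => V X
  | .dia k φ, V => {τ ∈ K.T | atLeast k (childrenIn K.T τ ∩ denot K φ V)}
  | .box k φ, V => {τ ∈ K.T | ¬ atLeast k (childrenIn K.T τ \ denot K φ V)}
  | .mu X φ, V => ⋂₀ {W : Set Node | W ⊆ K.T ∧ denot K φ (Function.update V X W) ⊆ W}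
  | .nu X φ, V => ⋃₀ {W : Set Node | W ⊆ K.T ∧ W ⊆ denot K φ (Function.update V X W)}

/-- Free fixpoint variables. -/
def free {AP : Type} : GMC AP → Set ℕ
  | .ff => ∅
  | .tt => ∅
  | .atom _ => ∅
  | .not φ => φ.free
  | .and φ ψ => φ.free ∪ ψ.free
  | .or φ ψ => φ.free ∪ ψ.free
  | .var X => {X}
  | .dia _ φ => φ.free
  | .box _ φ => φ.free
  | .mu X φ => φ.free \ {X}
  | .nu X φ => φ.free \ {X}

/-- Every free occurrence of `X` lies under an even (`b = true`) resp. odd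
(`b = false`) number of negations. -/
def polOK {AP : Type} (X : ℕ) : Bool → GMC AP → Prop
  | _, .ff => True
  | _, .tt => True
  | _, .atom _ => True
  | b, .not φ => polOK X (!b) φ
  | b, .and φ ψ => polOK X b φ ∧ polOK X b ψ
  | b, .or φ ψ => polOK X b φ ∧ polOK X b ψ
  | b, .var Y => Y = X → b = true
  | b, .dia _ φ => polOK X b φ
  | b, .box _ φ => polOK X b φ
  | b, .mu Y φ => Y = X ∨ polOK X b φ
  | b, .nu Y φ => Y = X ∨ polOK X b φ

/-- Every bound variable occurs only positively in the scope of its binder. -/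
def boundPos {AP : Type} : GMC AP → Prop
  | .ff => True
  | .tt => True
  | .atom _ => True
  | .not φ => φ.boundPos
  | .and φ ψ => φ.boundPos ∧ ψ.boundPos
  | .or φ ψ => φ.boundPos ∧ ψ.boundPos
  | .var _ => True
  | .dia _ φ => φ.boundPos
  | .box _ φ => φ.boundPos
  | .mu X φ => φ.boundPos ∧ polOK X true φ
  | .nu X φ => φ.boundPos ∧ polOK X true φ

/-- Every occurrence of every variable (free or bound) is positive. -/
def AllPos {AP : Type} (θ : GMC AP) : Prop :=
  θ.boundPos ∧ ∀ X : ℕ, polOK X true θ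

end GMC

mutual
  /-- Base formulas `Φ[Z,O]` of the One-Step Graded μ-Calculus. -/
  inductive IsBase {AP : Type} : Set ℕ → Set ℕ → GMC AP → Prop
    | ff   : ∀ {Z O : Set ℕ}, IsBase Z O .ff
    | tt   : ∀ {Z O : Set ℕ}, IsBase Z O .tt
    | atom : ∀ {Z O : Set ℕ} (a : AP), IsBase Z O (.atom a)
    | not  : ∀ {Z O : Set ℕ} {φ : GMC AP}, IsBase Z O φ → IsBase Z O (.not φ)
    | and  : ∀ {Z O : Set ℕ} {φ ψ : GMC AP},
        IsBase Z O φ → IsBase Z O ψ → IsBase Z O (.and φ ψ)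
    | or   : ∀ {Z O : Set ℕ} {φ ψ : GMC AP},
        IsBase Z O φ → IsBase Z O ψ → IsBase Z O (.or φ ψ)
    | dia  : ∀ {Z O : Set ℕ} {φ : GMC AP} (k : ℕ),
        IsBase O ∅ φ → IsBase Z O (.dia k φ)
    | box  : ∀ {Z O : Set ℕ} {φ : GMC AP} (k : ℕ),
        IsBase O ∅ φ → IsBase Z O (.box k φ)
    | var  : ∀ {Z O : Set ℕ} {X : ℕ}, X ∈ Z → IsBase Z O (.var X)
    | fix  : ∀ {Z O : Set ℕ} {θ : GMC AP}, IsFix ∅ ∅ θ → IsBase Z O θ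
  /-- Fixpoint formulas `Θ[Z,O]` of the One-Step Graded μ-Calculus. -/
  inductive IsFix {AP : Type} : Set ℕ → Set ℕ → GMC AP → Prop
    | mu : ∀ {Z O : Set ℕ} {X : ℕ} {θ : GMC AP},
        IsFix (Z ∪ {X}) (O ∪ {X}) θ → IsFix Z O (.mu X θ)
    | nu : ∀ {Z O : Set ℕ} {X : ℕ} {θ : GMC AP},
        IsFix (Z ∪ {X}) (O ∪ {X}) θ → IsFix Z O (.nu X θ)
    | base : ∀ {Z O : Set ℕ} {φ : GMC AP}, IsBase Z O φ → IsFix Z O φ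
end

/-- A Kripke tree satisfies a μ-calculus sentence iff its root belongs to its
denotation under the empty assignment. -/
def GKSat {AP : Type} (K : KripkeTree AP) (θ : GMC AP) : Prop :=
  K.root ∈ GMC.denot K θ (fun _ => ∅)

lemma atLeast_two_aux {c1 c2 : Node} {S : Set Node} (hne : c1 ≠ c2)
    (h1 : c1 ∈ S) (h2 : c2 ∈ S) : GMC.atLeast 2 S := by
  refine ⟨{c1, c2}, ?_, ?_⟩
  · rw [Finset.card_insert_of_notMem (by simp [hne]), Finset.card_singleton]
  · intro x hx
    simp only [Finset.coe_insert, Finset.coe_singleton, Set.mem_insert_iff,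
      Set.mem_singleton_iff] at hx
    rcases hx with rfl | rfl <;> assumption

lemma atLeast_one_aux {c : Node} {S : Set Node} (h : c ∈ S) : GMC.atLeast 1 S :=
  ⟨{c}, Finset.card_singleton c, by simpa⟩

lemma of_atLeast_two_aux {S : Set Node} (h : GMC.atLeast 2 S) :
    ∃ c1 ∈ S, ∃ c2 ∈ S, c1 ≠ c2 := by
  obtain ⟨F, hc, hs⟩ := h
  obtain ⟨a, b, hab, rfl⟩ := Finset.card_eq_two.mp hc
  exact ⟨a, hs (by simp), b, hs (by simp), hab⟩

lemma of_atLeast_one_aux {S : Set Node} (h : GMC.atLeast 1 S) : ∃ c, c ∈ S := by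
  obtain ⟨F, hc, hs⟩ := h
  obtain ⟨a, rfl⟩ := Finset.card_eq_one.mp hc
  exact ⟨a, hs (by simp)⟩

/-- Walk back along a path: if `τ ++ ρ ∈ U` and `U` is closed under
"has a child in `U`", then `τ ∈ U`. -/
lemma walkback_aux {T : Set Node} {r : Node} (hT : IsTreeRooted T r) {U : Set Node}
    (hUT : U ⊆ T)
    (hF : ∀ σ ∈ T, (∃ n : ℕ, σ ++ [n] ∈ U) → σ ∈ U) :
    ∀ (ρ : List ℕ) (τ : Node), τ ∈ T → τ ++ ρ ∈ U → τ ∈ U := by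
  intro ρ
  induction ρ using List.reverseRecOn with
  | nil => intro τ _ h; simpa using h
  | append_singleton ρ n ih =>
      intro τ hτ h
      have h' : (τ ++ ρ) ++ [n] ∈ U := by simpa [List.append_assoc] using h
      apply ih τ hτ
      apply hF (τ ++ ρ) ?_ ⟨n, h'⟩
      obtain ⟨α, rfl⟩ := hT.2.1 τ hτ
      have hmem : r ++ (α ++ (ρ ++ [n])) ∈ T := by
        have := hUT h'
        simpa [List.append_assoc] using this
      have := hT.2.2 (α ++ (ρ ++ [n])) (α ++ ρ) hmem ⟨[n], by simp [List.append_assoc]⟩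
      simpa [List.append_assoc] using this

/-- the density property is expressible in OSGμC by the sentence
`νX. μY. (◇_{≥2} X) ∨ (◇_{≥1} Y)`. -/
theorem stmt16 (AP : Type) [Fintype AP] (K : KripkeTree AP) :
    GKSat K (GMC.nu 0 (GMC.mu 1 (GMC.or (GMC.dia 2 (GMC.var 0)) (GMC.dia 1 (GMC.var 1)))))
      ↔ DenseTree K.T := by
  have hrooted := K.rooted
  -- characterization of satisfaction
  have key : GKSat K (GMC.nu 0 (GMC.mu 1 (GMC.or (GMC.dia 2 (GMC.var 0)) (GMC.dia 1 (GMC.var 1)))))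
      ↔ ∃ W : Set Node, W ⊆ K.T ∧ K.root ∈ W ∧
          ∀ U : Set Node, U ⊆ K.T →
            (∀ τ ∈ K.T, GMC.atLeast 2 (GMC.childrenIn K.T τ ∩ W) → τ ∈ U) →
            (∀ τ ∈ K.T, GMC.atLeast 1 (GMC.childrenIn K.T τ ∩ U) → τ ∈ U) →
            W ⊆ U := by
    simp only [GKSat, GMC.denot, Set.mem_sUnion, Set.mem_setOf_eq]
    constructor
    · rintro ⟨W, ⟨hWT, hWfix⟩, hrW⟩
      refine ⟨W, hWT, hrW, ?_⟩
      intro U hUT h2 h1 τ hτ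
      have hτfix := hWfix hτ
      simp only [GMC.denot, Set.mem_sInter, Set.mem_setOf_eq] at hτfix
      apply hτfix U
      refine ⟨hUT, ?_⟩
      intro x hx
      simp only [GMC.denot, Set.mem_union, Set.mem_setOf_eq,
        Function.update_self, Function.update_of_ne (by norm_num : (0:ℕ) ≠ 1)] at hx
      rcases hx with ⟨hxT, hx2⟩ | ⟨hxT, hx1⟩
      · exact h2 x hxT hx2
      · exact h1 x hxT hx1
    · rintro ⟨W, hWT, hrW, hmin⟩
      refine ⟨W, ⟨hWT, ?_⟩, hrW⟩
      intro τ hτ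
      simp only [GMC.denot, Set.mem_sInter, Set.mem_setOf_eq]
      rintro U ⟨hUT, hUfix⟩
      refine hmin U hUT ?_ ?_ hτ
      · intro x hxT hx2
        apply hUfix
        simp only [GMC.denot, Set.mem_union, Set.mem_setOf_eq,
          Function.update_self, Function.update_of_ne (by norm_num : (0:ℕ) ≠ 1)]
        exact Or.inl ⟨hxT, hx2⟩
      · intro x hxT hx1
        apply hUfix
        simp only [GMC.denot, Set.mem_union, Set.mem_setOf_eq,
          Function.update_self, Function.update_of_ne (by norm_num : (0:ℕ) ≠ 1)]
        exact Or.inr ⟨hxT, hx1⟩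
  rw [key]
  constructor
  · -- satisfaction → dense
    rintro ⟨W, hWT, hrW, hmin⟩
    -- every node of W has a descendant with ≥ 2 children in W
    set U : Set Node :=
      {τ | τ ∈ K.T ∧ ∃ τ' ∈ K.T, τ <+: τ' ∧ GMC.atLeast 2 (GMC.childrenIn K.T τ' ∩ W)}
      with hUdef
    have hP : W ⊆ U := by
      refine hmin U (fun x hx => hx.1) ?_ ?_
      · intro τ hτ h2
        exact ⟨hτ, τ, hτ, List.prefix_refl τ, h2⟩
      · intro τ hτ h1
        obtain ⟨c, hcmem, hcU⟩ := of_atLeast_one_aux h1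
        obtain ⟨_, n, rfl⟩ := hcmem
        obtain ⟨_, τ', hτ'T, hpre, h2⟩ := hcU
        exact ⟨hτ, τ', hτ'T, (List.prefix_append τ [n]).trans hpre, h2⟩
    -- the dense subtree
    refine ⟨{σ | σ ∈ K.T ∧ ∃ τ ∈ W, σ <+: τ}, ⟨fun x hx => hx.1, K.root, ?_, ?_, ?_⟩, ?_⟩
    · exact ⟨hrooted.1, K.root, hrW, List.prefix_refl _⟩
    · intro σ hσ; exact hrooted.2.1 σ hσ.1
    · rintro σ σ' ⟨hσT, τ, hτW, hpre⟩ hpre'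
      refine ⟨hrooted.2.2 σ σ' hσT hpre', τ, hτW, ?_⟩
      obtain ⟨t, rfl⟩ := hpre'
      have hp : K.root ++ σ' <+: K.root ++ (σ' ++ t) := ⟨t, by simp [List.append_assoc]⟩
      exact hp.trans hpre
    · rintro σ ⟨hσT, τ, hτW, hpre⟩
      obtain ⟨_, τ', hτ'T, hpre', h2⟩ := hP hτW
      obtain ⟨c1, ⟨hc1ch, hc1W⟩, c2, ⟨hc2ch, hc2W⟩, hne⟩ := of_atLeast_two_aux h2
      obtain ⟨hc1T, n, rfl⟩ := hc1ch
      obtain ⟨hc2T, m, rfl⟩ := hc2ch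
      have hnm : n ≠ m := by
        intro h; exact hne (by rw [h])
      refine ⟨τ', ⟨hτ'T, τ' ++ [n], hc1W, List.prefix_append _ _⟩,
        hpre.trans hpre', n, m, hnm, ⟨hc1T, τ' ++ [n], hc1W, List.prefix_refl _⟩,
        ⟨hc2T, τ' ++ [m], hc2W, List.prefix_refl _⟩⟩
  · -- dense → satisfaction
    rintro ⟨S, ⟨hST, rS, hrS, hSroot, hSclose⟩, hdense⟩
    set W : Set Node := {τ | τ ∈ K.T ∧ ∃ σ ∈ S, τ <+: σ} with hWdef
    refine ⟨W, fun x hx => hx.1, ⟨hrooted.1, rS, hrS, hrooted.2.1 rS (hST hrS)⟩, ?_⟩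
    rintro U hUT h2 h1 τ ⟨hτT, σ, hσS, hpre⟩
    obtain ⟨σ', hσ'S, hpre', n, m, hnm, hnS, hmS⟩ := hdense σ hσS
    -- σ' has two children in W, hence σ' ∈ U
    have hσ'U : σ' ∈ U := by
      apply h2 σ' (hST hσ'S)
      apply atLeast_two_aux (c1 := σ' ++ [n]) (c2 := σ' ++ [m])
      · intro h; exact hnm (by simpa using h)
      · exact ⟨⟨hST hnS, n, rfl⟩, hST hnS, σ' ++ [n], hnS, List.prefix_refl _⟩
      · exact ⟨⟨hST hmS, m, rfl⟩, hST hmS, σ' ++ [m], hmS, List.prefix_refl _⟩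
    -- walk back from σ' to τ
    obtain ⟨ρ, rfl⟩ := hpre.trans hpre'
    refine walkback_aux hrooted hUT ?_ ρ τ hτT hσ'U
    intro x hxT ⟨k, hk⟩
    exact h1 x hxT (atLeast_one_aux ⟨⟨hUT hk, k, rfl⟩, hk⟩)
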